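/- Let ω = (j₃ j₂ j₁) be a 3-cycle in S_n and σ ∈ S_n. If exactly two of the points j₁, j₂, j₃ lie in a common cycle of σ and the third lies in a different cycle, then ℓ(ωσ) = ℓ(σ). In particular, if j₁ and j₂ lie in one cycle of σ and j₃ lies in a different cycle, then in ωσ the points j₂ and j₃ lie in a common cycle and j₁ lies in a cycle of ωσ not containing j₂ and j₃. -/
import Mathlib


open Equiv

/-- Number of disjoint cycles of a permutation of `Fin n`, counting each fixed
point as a cycle of length 1. -/
def cycleCount {n : ℕ} (σ : Perm (Fin n)) : ℕ :=
  σ.cycleType.card + (n - σ.support.card)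

open Equiv.Perm Finset

variable {n : ℕ}

private lemma sameCycle_iff_nat {σ : Perm (Fin n)} {a b : Fin n} :
    σ.SameCycle a b ↔ ∃ i : ℕ, (σ ^ i) a = b := by
  constructor
  · intro h
    obtain ⟨i, -, hi⟩ := h.exists_pow_eq'
    exact ⟨i, hi⟩
  · rintro ⟨i, rfl⟩
    exact ⟨(i : ℤ), by simp [zpow_natCast]⟩

private lemma mem_of_invariant {σ : Perm (Fin n)} {S : Set (Fin n)}
    (hS : ∀ c ∈ S, σ c ∈ S) {a b : Fin n} (ha : a ∈ S) (h : σ.SameCycle a b) : b ∈ S := by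
  obtain ⟨i, rfl⟩ := sameCycle_iff_nat.1 h
  induction i with
  | zero => simpa
  | succ k ih =>
    rw [pow_succ', Perm.mul_apply]
    exact hS _ (ih ⟨(k:ℤ), by simp [zpow_natCast]⟩)

private lemma swap_mul_pow_eq {σ : Perm (Fin n)} {x y a : Fin n} (i : ℕ)
    (h : ∀ j, 1 ≤ j → j ≤ i → (σ ^ j) a ≠ x ∧ (σ ^ j) a ≠ y) :
    ((Equiv.swap x y * σ) ^ i) a = (σ ^ i) a := by
  induction i with
  | zero => rfl
  | succ k ih =>
    have ih' := ih fun j hj1 hj2 => h j hj1 (hj2.trans (Nat.le_succ k))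
    have hk := h (k + 1) (Nat.succ_le_succ (Nat.zero_le k)) le_rfl
    rw [pow_succ', Perm.mul_apply, ih', Perm.mul_apply]
    rw [show σ ((σ ^ k) a) = (σ ^ (k + 1)) a by rw [pow_succ', Perm.mul_apply]]
    exact Equiv.swap_apply_of_ne_of_ne hk.1 hk.2

private lemma swap_mul_sameCycle_of_not {σ : Perm (Fin n)} {x y : Fin n}
    (h : ¬ σ.SameCycle x y) : (Equiv.swap x y * σ).SameCycle x y := by
  have hex : ∃ k, 0 < k ∧ (σ ^ k) y = y :=
    ⟨orderOf σ, orderOf_pos σ, by simp [pow_orderOf_eq_one]⟩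
  classical
  set k := Nat.find hex with hkdef
  obtain ⟨hk0, hky⟩ := Nat.find_spec hex
  have hmin : ∀ j, j < k → ¬(0 < j ∧ (σ ^ j) y = y) := fun j hj => Nat.find_min hex hj
  have hne : ∀ j, 1 ≤ j → j ≤ k - 1 → (σ ^ j) y ≠ x ∧ (σ ^ j) y ≠ y := by
    intro j hj1 hj2
    constructor
    · intro hxj
      exact h (Perm.SameCycle.symm ⟨(j : ℤ), by simp [zpow_natCast, hxj]⟩)
    · intro hyj
      exact hmin j (by omega) ⟨hj1, hyj⟩
  have h1 : ((Equiv.swap x y * σ) ^ (k - 1)) y = (σ ^ (k - 1)) y :=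
    swap_mul_pow_eq (k - 1) hne
  have h2 : ((Equiv.swap x y * σ) ^ k) y = x := by
    have : k = (k - 1) + 1 := by omega
    rw [this, pow_succ', Perm.mul_apply, h1, Perm.mul_apply,
      show σ ((σ ^ (k - 1)) y) = (σ ^ k) y by
        rw [show (σ:Perm (Fin n)) ^ k = σ ^ ((k-1)+1) by rw [← this], pow_succ', Perm.mul_apply],
      hky, Equiv.swap_apply_right]
  exact Perm.SameCycle.symm ⟨(k : ℤ), by simp [zpow_natCast, h2]⟩

private lemma not_sameCycle_swap_mul_of_same {σ : Perm (Fin n)} {x y : Fin n}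
    (hxy : x ≠ y) (h : σ.SameCycle x y) : ¬ (Equiv.swap x y * σ).SameCycle x y := by
  classical
  obtain ⟨i, hi⟩ := sameCycle_iff_nat.1 h
  have hex : ∃ k, 0 < k ∧ (σ ^ k) x = y := by
    refine ⟨i, ?_, hi⟩
    rcases Nat.eq_zero_or_pos i with h0 | h0
    · exact absurd (by simpa [h0] using hi) hxy
    · exact h0
  set k := Nat.find hex with hkdef
  obtain ⟨hk0, hky⟩ := Nat.find_spec hex
  have hmin : ∀ j, j < k → ¬(0 < j ∧ (σ ^ j) x = y) := fun j hj => Nat.find_min hex hj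
  have hnx : ∀ j, 0 < j → j < k → (σ ^ j) x ≠ x := by
    intro j hj0 hjk hxx
    refine hmin (k - j) (by omega) ⟨by omega, ?_⟩
    have : (σ ^ (k - j)) ((σ ^ j) x) = (σ ^ k) x := by
      rw [← Perm.mul_apply, ← pow_add]; congr 2; omega
    rw [hxx] at this; rw [this, hky]
  have hny : ∀ j, j < k → (σ ^ j) x ≠ y := by
    intro j hjk hxx
    rcases Nat.eq_zero_or_pos j with h0 | h0
    · exact hxy (by simpa [h0] using hxx)
    · exact hmin j hjk ⟨h0, hxx⟩
  -- invariant set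
  set S : Set (Fin n) := {c | ∃ j, j < k ∧ (σ ^ j) x = c} with hS
  have hxS : x ∈ S := ⟨0, hk0, rfl⟩
  have hyS : y ∉ S := by
    rintro ⟨j, hjk, hj⟩
    exact hny j hjk hj
  have hinv : ∀ c ∈ S, (Equiv.swap x y * σ) c ∈ S := by
    rintro c ⟨j, hjk, rfl⟩
    rw [Perm.mul_apply, show σ ((σ ^ j) x) = (σ ^ (j + 1)) x by rw [pow_succ', Perm.mul_apply]]
    rcases Nat.lt_or_ge (j + 1) k with hlt | hge
    · rw [Equiv.swap_apply_of_ne_of_ne (hnx (j+1) (Nat.succ_pos j) hlt) (hny (j+1) hlt)]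
      exact ⟨j + 1, hlt, rfl⟩
    · have : j + 1 = k := by omega
      rw [this, hky, Equiv.swap_apply_right]
      exact hxS
  exact fun hc => hyS (mem_of_invariant hinv hxS hc)

private lemma pair_dir {σ : Perm (Fin n)} {x y b : Fin n}
    (h : σ.SameCycle x b ∨ σ.SameCycle y b) :
    (Equiv.swap x y * σ).SameCycle x b ∨ (Equiv.swap x y * σ).SameCycle y b := by
  set τ := Equiv.swap x y * σ with hτ
  have hστ : ∀ c, σ c = Equiv.swap x y (τ c) := by
    intro c
    rw [hτ, Perm.mul_apply, Equiv.swap_apply_self]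
  set S : Set (Fin n) := {c | τ.SameCycle x c ∨ τ.SameCycle y c} with hS
  have hxS : x ∈ S := Or.inl (Perm.SameCycle.refl _ _)
  have hyS : y ∈ S := Or.inr (Perm.SameCycle.refl _ _)
  have hswap : ∀ c ∈ S, Equiv.swap x y c ∈ S := by
    intro c hc
    rcases eq_or_ne c x with rfl | hcx
    · rw [Equiv.swap_apply_left]; exact hyS
    rcases eq_or_ne c y with rfl | hcy
    · rw [Equiv.swap_apply_right]; exact hxS
    · rwa [Equiv.swap_apply_of_ne_of_ne hcx hcy]
  have hinv : ∀ c ∈ S, σ c ∈ S := by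
    intro c hc
    rw [hστ]
    refine hswap _ ?_
    rcases hc with hc | hc
    · exact Or.inl (hc.trans ⟨1, by simp⟩)
    · exact Or.inr (hc.trans ⟨1, by simp⟩)
  rcases h with h | h
  · exact mem_of_invariant hinv hxS h
  · exact mem_of_invariant hinv hyS h

private lemma pair_iff {σ : Perm (Fin n)} {x y b : Fin n} :
    σ.SameCycle x b ∨ σ.SameCycle y b ↔
      (Equiv.swap x y * σ).SameCycle x b ∨ (Equiv.swap x y * σ).SameCycle y b := by
  constructor
  · exact pair_dir
  · intro h
    have := pair_dir (σ := Equiv.swap x y * σ) (x := x) (y := y) (b := b) h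
    rw [← mul_assoc, Equiv.swap_mul_self, one_mul] at this
    exact this

private lemma sameCycle_swap_mul_iff {σ : Perm (Fin n)} {x y a b : Fin n}
    (hax : ¬ σ.SameCycle a x) (hay : ¬ σ.SameCycle a y) :
    (Equiv.swap x y * σ).SameCycle a b ↔ σ.SameCycle a b := by
  set τ := Equiv.swap x y * σ with hτ
  have hστ : ∀ c, σ c = Equiv.swap x y (τ c) := fun c => by
    rw [hτ, Perm.mul_apply, Equiv.swap_apply_self]
  have hτax : ¬ τ.SameCycle a x := by
    intro hc
    rcases pair_iff.2 (Or.inl hc.symm) with h | h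
    · exact hax h.symm
    · exact hay h.symm
  have hτay : ¬ τ.SameCycle a y := by
    intro hc
    rcases pair_iff.2 (Or.inr hc.symm) with h | h
    · exact hax h.symm
    · exact hay h.symm
  constructor
  · intro h
    set S : Set (Fin n) := {c | σ.SameCycle a c} with hS
    have hinv : ∀ c ∈ S, τ c ∈ S := by
      intro c hc
      have hσc : σ c ∈ S := hc.trans ⟨1, by simp⟩
      have h1 : σ c ≠ x := fun he => hax (he ▸ hσc)
      have h2 : σ c ≠ y := fun he => hay (he ▸ hσc)
      rw [hτ, Perm.mul_apply, Equiv.swap_apply_of_ne_of_ne h1 h2]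
      exact hσc
    exact mem_of_invariant hinv (Perm.SameCycle.refl _ _) h
  · intro h
    set S : Set (Fin n) := {c | τ.SameCycle a c} with hS
    have hinv : ∀ c ∈ S, σ c ∈ S := by
      intro c hc
      have hτc : τ c ∈ S := hc.trans ⟨1, by simp⟩
      have h1 : τ c ≠ x := fun he => hτax (he ▸ hτc)
      have h2 : τ c ≠ y := fun he => hτay (he ▸ hτc)
      rw [hστ, Equiv.swap_apply_of_ne_of_ne h1 h2]
      exact hτc
    exact mem_of_invariant hinv (Perm.SameCycle.refl _ _) h

private lemma merge_class {σ : Perm (Fin n)} {x y b : Fin n}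
    (h : ¬ σ.SameCycle x y) :
    (Equiv.swap x y * σ).SameCycle x b ↔ σ.SameCycle x b ∨ σ.SameCycle y b := by
  constructor
  · intro hb
    exact pair_iff.2 (Or.inl hb)
  · intro hb
    rcases pair_iff.1 hb with hc | hc
    · exact hc
    · exact (swap_mul_sameCycle_of_not h).trans hc

private def cls (σ : Perm (Fin n)) (a : Fin n) : Finset (Fin n) :=
  Finset.univ.filter (σ.SameCycle a)

private lemma mem_cls {σ : Perm (Fin n)} {a b : Fin n} : b ∈ cls σ a ↔ σ.SameCycle a b := by
  simp [cls]

private lemma cls_eq_iff {σ : Perm (Fin n)} {a b : Fin n} :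
    cls σ a = cls σ b ↔ σ.SameCycle a b := by
  constructor
  · intro h
    have : b ∈ cls σ a := h ▸ mem_cls.2 (Perm.SameCycle.refl _ _)
    exact mem_cls.1 this
  · intro h
    ext c
    simp only [mem_cls]
    exact ⟨fun hc => h.symm.trans hc, fun hc => h.trans hc⟩

private lemma cls_fixed {σ : Perm (Fin n)} {a : Fin n} (ha : σ a = a) : cls σ a = {a} := by
  ext c
  simp only [mem_cls, Finset.mem_singleton]
  constructor
  · intro h
    obtain ⟨i, rfl⟩ := sameCycle_iff_nat.1 h
    induction i with
    | zero => rfl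
    | succ k ih =>
      rw [pow_succ, Perm.mul_apply, ha]
      exact ih ⟨(k:ℤ), by simp [zpow_natCast]⟩
  · rintro rfl
    exact Perm.SameCycle.refl _ _

private def classes (σ : Perm (Fin n)) : Finset (Finset (Fin n)) :=
  Finset.univ.image (cls σ)

private lemma cls_support {σ : Perm (Fin n)} {a : Fin n} (ha : a ∈ σ.support) :
    cls σ a = (σ.cycleOf a).support := by
  ext b
  rw [mem_cls, Perm.mem_support_cycleOf_iff]
  exact ⟨fun h => ⟨h, ha⟩, fun h => h.1⟩

private lemma classes_card (σ : Perm (Fin n)) : (classes σ).card = cycleCount σ := by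
  classical
  have huniv : (Finset.univ : Finset (Fin n)) = σ.support ∪ σ.supportᶜ := by
    simp
  have hsplit : classes σ = σ.support.image (cls σ) ∪ σ.supportᶜ.image (cls σ) := by
    rw [classes, huniv, Finset.image_union]
  -- the image of the complement
  have hfix : ∀ a ∈ σ.supportᶜ, cls σ a = {a} := by
    intro a ha
    exact cls_fixed (by simpa [Perm.mem_support] using ha)
  have hcard2 : (σ.supportᶜ.image (cls σ)).card = n - σ.support.card := by
    rw [Finset.card_image_of_injOn]
    · rw [Finset.card_compl, Fintype.card_fin]
    · intro a ha b hb hab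
      rw [hfix a ha, hfix b hb] at hab
      exact Finset.singleton_injective hab
  -- the image of the support
  have himg : σ.support.image (cls σ) = σ.cycleFactorsFinset.image Perm.support := by
    ext A
    simp only [Finset.mem_image]
    constructor
    · rintro ⟨a, ha, rfl⟩
      exact ⟨σ.cycleOf a, Perm.cycleOf_mem_cycleFactorsFinset_iff.2 ha, (cls_support ha).symm⟩
    · rintro ⟨c, hc, rfl⟩
      have hc1 : c.IsCycle := (Perm.mem_cycleFactorsFinset_iff.1 hc).1
      obtain ⟨a, ha⟩ := hc1.nonempty_support
      have haσ : a ∈ σ.support := Perm.mem_cycleFactorsFinset_support_le hc ha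
      refine ⟨a, haσ, ?_⟩
      rw [cls_support haσ, ← Perm.cycle_is_cycleOf ha hc]
  have hcard1 : (σ.support.image (cls σ)).card = σ.cycleType.card := by
    rw [himg, Finset.card_image_of_injOn, Perm.cycleType_def, Multiset.card_map]
    · rfl
    · intro c hc d hd hcd
      have hc1 : c.IsCycle := (Perm.mem_cycleFactorsFinset_iff.1 hc).1
      obtain ⟨a, ha⟩ := hc1.nonempty_support
      have had : a ∈ d.support := hcd ▸ ha
      rw [Perm.cycle_is_cycleOf ha hc, ← Perm.cycle_is_cycleOf had hd]
  have hdisj : Disjoint (σ.support.image (cls σ)) (σ.supportᶜ.image (cls σ)) := by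
    rw [Finset.disjoint_left]
    rintro A hA hA'
    obtain ⟨a, ha, rfl⟩ := Finset.mem_image.1 hA
    obtain ⟨b, hb, hba⟩ := Finset.mem_image.1 hA'
    rw [hfix b hb] at hba
    have : a ∈ cls σ a := mem_cls.2 (Perm.SameCycle.refl _ _)
    rw [← hba, Finset.mem_singleton] at this
    subst this
    exact absurd ha (by simpa using hb)
  rw [hsplit, Finset.card_union_of_disjoint hdisj, hcard1, hcard2, cycleCount]

private lemma merge_count {σ : Perm (Fin n)} {x y : Fin n} (hxy : x ≠ y)
    (h : ¬ σ.SameCycle x y) :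
    cycleCount (Equiv.swap x y * σ) + 1 = cycleCount σ := by
  classical
  set τ := Equiv.swap x y * σ with hτ
  set U : Finset (Fin n) := cls σ x ∪ cls σ y with hU
  have hclsU : cls τ x = U := by
    ext b
    rw [mem_cls, hτ, merge_class h, hU, Finset.mem_union, mem_cls, mem_cls]
  set E : Finset (Finset (Fin n)) := ((classes σ).erase (cls σ x)).erase (cls σ y) with hE
  have hkey : classes τ = insert U E := by
    ext A
    simp only [classes, Finset.mem_image, Finset.mem_univ, true_and]
    constructor
    · rintro ⟨a, rfl⟩
      by_cases hax : σ.SameCycle a x ∨ σ.SameCycle a y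
      · have hτxa : τ.SameCycle x a := by
          rw [hτ, merge_class h]
          rcases hax with h' | h'
          · exact Or.inl h'.symm
          · exact Or.inr h'.symm
        have : cls τ a = cls τ x := cls_eq_iff.2 hτxa.symm
        rw [this, hclsU]
        exact Finset.mem_insert_self _ _
      · push_neg at hax
        have : cls τ a = cls σ a := by
          ext b
          rw [mem_cls, mem_cls, hτ, sameCycle_swap_mul_iff hax.1 hax.2]
        rw [this]
        refine Finset.mem_insert_of_mem ?_
        rw [hE, Finset.mem_erase, Finset.mem_erase]
        refine ⟨?_, ?_, Finset.mem_image.2 ⟨a, Finset.mem_univ a, rfl⟩⟩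
        · rw [Ne, cls_eq_iff]; exact fun hc => hax.2 hc
        · rw [Ne, cls_eq_iff]; exact fun hc => hax.1 hc
    · intro hA
      rcases Finset.mem_insert.1 hA with rfl | hA
      · exact ⟨x, hclsU⟩
      · rw [hE, Finset.mem_erase, Finset.mem_erase] at hA
        obtain ⟨hAy, hAx, hAmem⟩ := hA
        obtain ⟨a, -, rfl⟩ := Finset.mem_image.1 hAmem
        have hax : ¬ σ.SameCycle a x := fun hc => hAx (cls_eq_iff.2 hc)
        have hay : ¬ σ.SameCycle a y := fun hc => hAy (cls_eq_iff.2 hc)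
        refine ⟨a, ?_⟩
        ext b
        rw [mem_cls, mem_cls, hτ, sameCycle_swap_mul_iff hax hay]
  have hUE : U ∉ E := by
    rw [hE, Finset.mem_erase, Finset.mem_erase]
    rintro ⟨hUy, hUx, hUmem⟩
    obtain ⟨a, -, ha⟩ := Finset.mem_image.1 hUmem
    have : x ∈ cls σ a := by rw [ha, hU]; exact Finset.mem_union_left _ (mem_cls.2 (Perm.SameCycle.refl _ _))
    have : cls σ a = cls σ x := cls_eq_iff.2 (mem_cls.1 this)
    exact hUx (ha ▸ this)
  have hyx : cls σ y ∈ (classes σ).erase (cls σ x) := by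
    rw [Finset.mem_erase]
    refine ⟨?_, Finset.mem_image.2 ⟨y, Finset.mem_univ y, rfl⟩⟩
    rw [Ne, cls_eq_iff]
    exact fun hc => h hc.symm
  have hxmem : cls σ x ∈ classes σ := Finset.mem_image.2 ⟨x, Finset.mem_univ x, rfl⟩
  rw [← classes_card, ← classes_card, hkey, Finset.card_insert_of_notMem hUE, hE,
    Finset.card_erase_of_mem hyx, Finset.card_erase_of_mem hxmem]
  have hne : cls σ x ≠ cls σ y := fun hc => h (cls_eq_iff.1 hc)
  have h2le : 2 ≤ (classes σ).card := by
    calc 2 = ({cls σ x, cls σ y} : Finset (Finset (Fin n))).card := by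
            rw [Finset.card_insert_of_notMem (by simpa using hne), Finset.card_singleton]
    _ ≤ (classes σ).card := Finset.card_le_card (Finset.insert_subset hxmem
          (Finset.singleton_subset_iff.2 (Finset.mem_of_mem_erase hyx)))
  omega

private lemma split_count {σ : Perm (Fin n)} {x y : Fin n} (hxy : x ≠ y)
    (h : σ.SameCycle x y) :
    cycleCount (Equiv.swap x y * σ) = cycleCount σ + 1 := by
  have h2 : ¬ (Equiv.swap x y * σ).SameCycle x y := not_sameCycle_swap_mul_of_same hxy h
  have := merge_count hxy h2
  rw [← mul_assoc, Equiv.swap_mul_self, one_mul] at this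
  omega


/-- Let `ω = (j₃ j₂ j₁)` (sending `j₃ ↦ j₂ ↦ j₁ ↦ j₃`) be a 3-cycle. If exactly two of
`j₁, j₂, j₃` lie in a common cycle of `σ` and the third lies in a different cycle, then
`ℓ(ωσ) = ℓ(σ)`. In particular, if `j₁` and `j₂` lie in one cycle of `σ` and `j₃` in a
different one, then in `ωσ` the points `j₂, j₃` share a cycle and `j₁` lies in a cycle
not containing `j₂` and `j₃`. -/
theorem threeCycle_mul_case_two_in_common_cycle
    (n : ℕ) (σ ω : Perm (Fin n)) (j₁ j₂ j₃ : Fin n)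
    (h12 : j₁ ≠ j₂) (h13 : j₁ ≠ j₃) (h23 : j₂ ≠ j₃)
    (hω : ω = Equiv.swap j₃ j₂ * Equiv.swap j₂ j₁) :
    (((σ.SameCycle j₁ j₂ ∧ ¬ σ.SameCycle j₁ j₃) ∨
      (σ.SameCycle j₁ j₃ ∧ ¬ σ.SameCycle j₁ j₂) ∨
      (σ.SameCycle j₂ j₃ ∧ ¬ σ.SameCycle j₁ j₂)) →
        cycleCount (ω * σ) = cycleCount σ) ∧
    ((σ.SameCycle j₁ j₂ ∧ ¬ σ.SameCycle j₁ j₃) →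
      ((ω * σ).SameCycle j₂ j₃ ∧ ¬ (ω * σ).SameCycle j₁ j₂ ∧ ¬ (ω * σ).SameCycle j₁ j₃)) := by
  subst hω
  set σ₁ := Equiv.swap j₂ j₁ * σ with hσ₁
  constructor
  · rintro (⟨h1, h2⟩ | ⟨h1, h2⟩ | ⟨h1, h2⟩)
    · -- j₁ ~ j₂, j₃ apart
      have hs : cycleCount σ₁ = cycleCount σ + 1 := split_count (Ne.symm h12) h1.symm
      have h32 : ¬ σ.SameCycle j₃ j₂ := fun hc => h2 (h1.trans hc.symm)
      have h31 : ¬ σ.SameCycle j₃ j₁ := fun hc => h2 hc.symm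
      have hns : ¬ σ₁.SameCycle j₃ j₂ := by
        rw [hσ₁, sameCycle_swap_mul_iff h32 h31]; exact h32
      have hm := merge_count (Ne.symm h23) hns
      rw [mul_assoc, ← hσ₁]
      omega
    · -- j₁ ~ j₃, j₂ apart
      have h21 : ¬ σ.SameCycle j₂ j₁ := fun hc => h2 hc.symm
      have hm : cycleCount σ₁ + 1 = cycleCount σ := merge_count (Ne.symm h12) h21
      have hs1 : σ₁.SameCycle j₂ j₃ := by
        rw [hσ₁, merge_class h21]; exact Or.inr h1
      have hsp : cycleCount (Equiv.swap j₃ j₂ * σ₁) = cycleCount σ₁ + 1 :=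
        split_count (Ne.symm h23) hs1.symm
      rw [mul_assoc, ← hσ₁]
      omega
    · -- j₂ ~ j₃, j₁ apart
      have h21 : ¬ σ.SameCycle j₂ j₁ := fun hc => h2 hc.symm
      have hm : cycleCount σ₁ + 1 = cycleCount σ := merge_count (Ne.symm h12) h21
      have hs1 : σ₁.SameCycle j₂ j₃ := by
        rw [hσ₁, merge_class h21]; exact Or.inl h1
      have hsp : cycleCount (Equiv.swap j₃ j₂ * σ₁) = cycleCount σ₁ + 1 :=
        split_count (Ne.symm h23) hs1.symm
      rw [mul_assoc, ← hσ₁]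
      omega
  · rintro ⟨h1, h2⟩
    have h32 : ¬ σ.SameCycle j₃ j₂ := fun hc => h2 (h1.trans hc.symm)
    have h31 : ¬ σ.SameCycle j₃ j₁ := fun hc => h2 hc.symm
    have hns : ¬ σ₁.SameCycle j₃ j₂ := by
      rw [hσ₁, sameCycle_swap_mul_iff h32 h31]; exact h32
    have hsc : (Equiv.swap j₃ j₂ * σ₁).SameCycle j₂ j₃ :=
      (swap_mul_sameCycle_of_not hns).symm
    have hn12 : ¬ σ₁.SameCycle j₁ j₂ := by
      intro hc
      have hne : ¬ σ₁.SameCycle j₂ j₁ := by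
        rw [hσ₁]; exact not_sameCycle_swap_mul_of_same (Ne.symm h12) h1.symm
      exact hne hc.symm
    have hn13 : ¬ σ₁.SameCycle j₁ j₃ := by
      intro hc
      have hc' := hc.symm
      rw [hσ₁, sameCycle_swap_mul_iff h32 h31] at hc'
      exact h31 hc'
    have hfin : ∀ b, (Equiv.swap j₃ j₂ * σ₁).SameCycle j₁ b ↔ σ₁.SameCycle j₁ b :=
      fun b => sameCycle_swap_mul_iff hn13 hn12
    rw [mul_assoc, ← hσ₁]
    exact ⟨hsc, fun hc => hn12 ((hfin j₂).1 hc), fun hc => hn13 ((hfin j₃).1 hc)⟩
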